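/- The zero vector 0 ∈ ℝ^p is a global minimizer of the weighted Lasso objective β ↦ L(β,λ) if and only if λ ≥ λ_max, where λ_max = max_{1≤j≤p} |Σ_{i=1}^t w_i y_i X_{i,j}| = max_j |(XᵀWy)_j|. -/
import Mathlib


open Matrix BigOperators

/-- The weighted Lasso objective
`L(β,λ) = (1/2)·Σ_i w_i (y_i − X_iᵀβ)² + λ·Σ_j |β_j|`. -/
noncomputable def lassoObj {p t : ℕ} (X : Matrix (Fin t) (Fin p) ℝ)
    (y w : Fin t → ℝ) (lam : ℝ) (β : Fin p → ℝ) : ℝ :=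
  (1 / 2) * ∑ i, w i * (y i - X i ⬝ᵥ β) ^ 2 + lam * ∑ j, |β j|

lemma lasso_c_apply {p t : ℕ} (X : Matrix (Fin t) (Fin p) ℝ) (y w : Fin t → ℝ) (j : Fin p) :
    ((Xᵀ * Matrix.diagonal w).mulVec y) j = ∑ i, X i j * w i * y i := by
  simp [Matrix.mulVec, dotProduct, Matrix.mul_diagonal, Matrix.transpose_apply]

lemma lasso_diff {p t : ℕ} (X : Matrix (Fin t) (Fin p) ℝ)
    (y w : Fin t → ℝ) (lam : ℝ) (β : Fin p → ℝ) :
    lassoObj X y w lam β = lassoObj X y w lam 0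
      + ((1 / 2) * ∑ i, w i * (X i ⬝ᵥ β) ^ 2
        - ∑ j, β j * ((Xᵀ * Matrix.diagonal w).mulVec y) j
        + lam * ∑ j, |β j|) := by
  have hsum : ∑ j, β j * ((Xᵀ * Matrix.diagonal w).mulVec y) j
      = ∑ i, w i * y i * (X i ⬝ᵥ β) := by
    simp only [lasso_c_apply, Finset.mul_sum, dotProduct]
    rw [Finset.sum_comm]
    apply Finset.sum_congr rfl; intro i _
    apply Finset.sum_congr rfl; intro j _
    ring
  simp only [lassoObj, dotProduct_zero, Pi.zero_apply, abs_zero, Finset.sum_const_zero,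
    mul_zero, add_zero, hsum]
  have hexp : ∑ i, w i * (y i - X i ⬝ᵥ β) ^ 2
      = ∑ i, w i * (y i - 0) ^ 2 + ∑ i, w i * (X i ⬝ᵥ β) ^ 2
        - 2 * ∑ i, w i * y i * (X i ⬝ᵥ β) := by
    rw [← Finset.sum_add_distrib, Finset.mul_sum, ← Finset.sum_sub_distrib]
    apply Finset.sum_congr rfl; intro i _
    ring
  rw [hexp]; ring

theorem lasso_zero_minimizer_iff
    {p t : ℕ} (hp : 0 < p) (X : Matrix (Fin t) (Fin p) ℝ) (y w : Fin t → ℝ)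
    (hw : ∀ i, 0 < w i) (lam : ℝ) (hlam : 0 ≤ lam) :
    (∀ β : Fin p → ℝ, lassoObj X y w lam 0 ≤ lassoObj X y w lam β) ↔
      lam ≥ Finset.univ.sup' (Finset.univ_nonempty_iff.mpr ⟨⟨0, hp⟩⟩)
        (fun j : Fin p => |((Xᵀ * Matrix.diagonal w).mulVec y) j|) := by
  set c : Fin p → ℝ := ((Xᵀ * Matrix.diagonal w).mulVec y) with hc
  constructor
  · intro h
    rw [ge_iff_le, Finset.sup'_le_iff]
    intro j _
    set A : ℝ := ∑ i, w i * (X i j) ^ 2 with hAdef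
    have hA : 0 ≤ A := Finset.sum_nonneg fun i _ =>
      mul_nonneg (hw i).le (sq_nonneg _)
    have key : ∀ ε : ℝ, 0 < ε → |c j| ≤ lam + ε * A / 2 := by
      intro ε hε
      set s : ℝ := if 0 ≤ c j then 1 else -1 with hs
      have hsc : s * c j = |c j| := by
        by_cases h0 : 0 ≤ c j
        · simp [hs, h0, abs_of_nonneg h0]
        · simp [hs, h0, abs_of_neg (lt_of_not_ge h0)]
      have hss : s ^ 2 = 1 := by
        by_cases h0 : 0 ≤ c j <;> simp [hs, h0]
      set β : Fin p → ℝ := Pi.single j (ε * s) with hβ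
      have hdot : ∀ i, X i ⬝ᵥ β = X i j * (ε * s) := by
        intro i; simp [hβ, dotProduct_single]
      have hs1 : |s| = 1 := by
        rw [hs]; split_ifs <;> simp
      have habs : ∑ j', |β j'| = ε := by
        have : ∀ j', |β j'| = if j' = j then ε else 0 := by
          intro j'
          by_cases hj : j' = j
          · subst hj
            simp [hβ, abs_mul, abs_of_pos hε, hs1]
          · simp [hβ, Pi.single_apply, hj]
        simp [this]
      have hβc : ∑ j', β j' * c j' = ε * |c j| := by
        have : ∀ j', β j' * c j' = if j' = j then ε * |c j| else 0 := by
          intro j'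
          by_cases hj : j' = j
          · subst hj
            simp [hβ, Pi.single_apply, mul_assoc, hsc]
          · simp [hβ, Pi.single_apply, hj]
        simp [this]
      have hQ : ∑ i, w i * (X i ⬝ᵥ β) ^ 2 = ε ^ 2 * A := by
        rw [hAdef, Finset.mul_sum]
        apply Finset.sum_congr rfl; intro i _
        rw [hdot i]
        rw [mul_pow, mul_pow, hss]
        ring
      have hineq := h β
      rw [lasso_diff X y w lam β] at hineq
      rw [← hc, hβc, hQ, habs] at hineq
      have h2 : 0 ≤ 1 / 2 * (ε ^ 2 * A) - ε * |c j| + lam * ε := by linarith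
      have h3 : ε * |c j| ≤ ε * (lam + ε * A / 2) := by ring_nf; ring_nf at h2; linarith
      exact le_of_mul_le_mul_left (by linarith [h3]) hε
    apply le_of_forall_pos_le_add
    intro δ hδ
    have hε : (0:ℝ) < 2 * δ / (A + 1) := by positivity
    have := key _ hε
    have hfrac : 2 * δ / (A + 1) * A / 2 ≤ δ := by
      have heq : 2 * δ / (A + 1) * A / 2 = δ * A / (A + 1) := by ring
      rw [heq, div_le_iff₀ (by linarith : (0:ℝ) < A + 1)]
      nlinarith
    linarith
  · intro hl β
    rw [lasso_diff X y w lam β, ← hc]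
    have hcj : ∀ j, |c j| ≤ lam := by
      intro j
      exact le_trans (Finset.le_sup' (fun j : Fin p => |c j|) (Finset.mem_univ j)) hl
    have hQ : 0 ≤ ∑ i, w i * (X i ⬝ᵥ β) ^ 2 :=
      Finset.sum_nonneg fun i _ => mul_nonneg (hw i).le (sq_nonneg _)
    have hlin : ∑ j, β j * c j ≤ lam * ∑ j, |β j| := by
      rw [Finset.mul_sum]
      apply Finset.sum_le_sum
      intro j _
      calc β j * c j ≤ |β j * c j| := le_abs_self _
        _ = |β j| * |c j| := abs_mul _ _
        _ ≤ |β j| * lam := mul_le_mul_of_nonneg_left (hcj j) (abs_nonneg _)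
        _ = lam * |β j| := mul_comm _ _
    linarith
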